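/- The q-analogue recurrence: define T_{n,q}(2a) by T_{n,q}(0) = 1 and T_{n,q}(2a) = -\sum_{b=0}^{a-1} \binom{n-2b}{2a-2b}_q T_{n,q}(2b). Then T_{n,q}(2a) = (-1)^a ([n]_q!/[n-2a]_q!) \Delta_{a,q}. -/

import Mathlib

noncomputable def qInt {K : Type*} [Field K] (q : K) (m : ℕ) : K :=
  ∑ i ∈ Finset.range m, q ^ i

noncomputable def qFact {K : Type*} [Field K] (q : K) : ℕ → K
  | 0 => 1
  | m + 1 => qFact q m * qInt q (m + 1)

noncomputable def qBinom {K : Type*} [Field K] (q : K) (n k : ℕ) : K :=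
  qFact q n / (qFact q k * qFact q (n - k))

/-- Determinant of the `n × n` lower Hessenberg matrix with `(i,j)` entry `1` if `j = i+1`,
`0` if `j > i+1`, and `f (i-j)` if `j ≤ i`. -/
noncomputable def hessDet {K : Type*} [Field K] (f : ℕ → K) (n : ℕ) : K :=
  Matrix.det (Matrix.of fun i j : Fin n =>
    if (j : ℕ) = (i : ℕ) + 1 then 1
    else if (i : ℕ) + 1 < (j : ℕ) then 0
    else f ((i : ℕ) - (j : ℕ)))

/-- `Δ_{a,q}` in `ℚ(q)` with `q = X`. -/
noncomputable def DeltaQ (a : ℕ) : RatFunc ℚ :=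
  hessDet (fun k => (qFact (RatFunc.X : RatFunc ℚ) (2 * k + 2))⁻¹) a

section
variable {K : Type*} [Field K]

noncomputable def hessEntry (f : ℕ → K) (r c : ℕ) : K :=
  if c = r + 1 then 1 else if r + 1 < c then 0 else f (r - c)

noncomputable def minorM (f : ℕ → K) (a j : ℕ) : Matrix (Fin a) (Fin a) K :=
  Matrix.of fun r c => hessEntry f (r : ℕ) (if (c : ℕ) < j then (c : ℕ) else (c : ℕ) + 1)

lemma hessDet_eq (f : ℕ → K) (m : ℕ) :
    hessDet f m = Matrix.det (Matrix.of fun i j : Fin m => hessEntry f (i:ℕ) (j:ℕ)) := rfl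

lemma minor_det (f : ℕ → K) : ∀ a j, j ≤ a → (minorM f a j).det = hessDet f j := by
  intro a
  induction a with
  | zero =>
    intro j hj
    interval_cases j
    simp [hessDet, Matrix.det_fin_zero]
  | succ a ih =>
    intro j hj
    rcases eq_or_lt_of_le hj with rfl | hlt
    · rw [hessDet_eq]
      congr 1
      ext r c
      have : (c : ℕ) < a + 1 := c.isLt
      simp [minorM, this, Nat.lt_succ_iff.mp this]
    · have hj' : j ≤ a := Nat.lt_succ_iff.mp hlt
      rw [Matrix.det_succ_column (minorM f (a+1) j) (Fin.last a)]
      rw [Finset.sum_eq_single (Fin.last a)]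
      · have h1 : minorM f (a+1) j (Fin.last a) (Fin.last a) = 1 := by
          simp only [minorM, Matrix.of_apply, hessEntry, Fin.val_last]
          rw [if_neg (show ¬ a < j by omega), if_pos rfl]
        rw [h1, Fin.succAbove_last]
        have h2 : (minorM f (a+1) j).submatrix Fin.castSucc Fin.castSucc = minorM f a j := by
          ext r c
          simp [minorM, Matrix.submatrix]
        rw [h2, ih j hj']
        simp
      · intro i _ hi
        have hz : minorM f (a+1) j i (Fin.last a) = 0 := by
          have hi' : (i : ℕ) < a := by
            have h1 := i.isLt
            have h2 : (i : ℕ) ≠ a := fun h => hi (Fin.ext h)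
            omega
          simp only [minorM, Matrix.of_apply, hessEntry, Fin.val_last]
          rw [if_neg (show ¬ a < j by omega), if_neg (show ¬ a + 1 = (i:ℕ) + 1 by omega),
            if_pos (by omega)]
        rw [hz]; ring
      · simp

lemma hess_rec (f : ℕ → K) (a : ℕ) :
    hessDet f (a + 1) =
      ∑ j ∈ Finset.range (a + 1), (-1 : K) ^ (a + j) * f (a - j) * hessDet f j := by
  rw [hessDet_eq, Matrix.det_succ_row _ (Fin.last a)]
  have key : ∀ j : Fin (a + 1),
      (-1 : K) ^ ((Fin.last a : ℕ) + (j : ℕ)) *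
          (Matrix.of fun i j : Fin (a + 1) => hessEntry f (i:ℕ) (j:ℕ)) (Fin.last a) j *
          ((Matrix.of fun i j : Fin (a + 1) => hessEntry f (i:ℕ) (j:ℕ)).submatrix
            (Fin.last a).succAbove j.succAbove).det
        = (-1 : K) ^ (a + (j : ℕ)) * f (a - (j : ℕ)) * hessDet f (j : ℕ) := by
    intro j
    have hja : (j : ℕ) ≤ a := Nat.lt_succ_iff.mp j.isLt
    have he : (Matrix.of fun i j : Fin (a + 1) => hessEntry f (i:ℕ) (j:ℕ)) (Fin.last a) j
        = f (a - (j : ℕ)) := by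
      simp only [Matrix.of_apply, hessEntry, Fin.val_last]
      rw [if_neg (by omega), if_neg (by omega)]
    have hs : ((Matrix.of fun i j : Fin (a + 1) => hessEntry f (i:ℕ) (j:ℕ)).submatrix
        (Fin.last a).succAbove j.succAbove) = minorM f a (j : ℕ) := by
      rw [Fin.succAbove_last]
      ext r c
      simp only [Matrix.submatrix_apply, Matrix.of_apply, minorM, Fin.coe_castSucc]
      congr 1
      rcases lt_or_ge ((c : ℕ)) ((j : ℕ)) with h | h
      · rw [Fin.succAbove_of_castSucc_lt _ _ (by simpa [Fin.lt_def] using h), if_pos h]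
        simp
      · rw [Fin.succAbove_of_le_castSucc _ _ (by simpa [Fin.le_def] using h), if_neg (by omega)]
        simp
    rw [he, hs, minor_det f a (j : ℕ) hja, Fin.val_last]
  rw [Finset.sum_congr rfl (fun j _ => key j)]
  exact Fin.sum_univ_eq_sum_range (fun j => (-1 : K) ^ (a + j) * f (a - j) * hessDet f j) (a + 1)

end

lemma qInt_X_ne_zero (m : ℕ) (hm : 1 ≤ m) : qInt (RatFunc.X : RatFunc ℚ) m ≠ 0 := by
  have hrw : qInt (RatFunc.X : RatFunc ℚ) m
      = algebraMap (Polynomial ℚ) (RatFunc ℚ) (∑ i ∈ Finset.range m, Polynomial.X ^ i) := by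
    simp [qInt, map_sum, map_pow, RatFunc.algebraMap_X]
  rw [hrw]
  apply RatFunc.algebraMap_ne_zero
  intro h
  have h0 := congrArg (fun p => Polynomial.coeff p 0) h
  simp only [Polynomial.finset_sum_coeff, Polynomial.coeff_X_pow, Polynomial.coeff_zero] at h0
  rw [Finset.sum_ite_eq (Finset.range m) 0 (fun _ => (1:ℚ))] at h0
  simp [Finset.mem_range] at h0
  omega

lemma qFact_X_ne_zero (m : ℕ) : qFact (RatFunc.X : RatFunc ℚ) m ≠ 0 := by
  induction m with
  | zero => simp [qFact]
  | succ k ih =>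
    rw [qFact]
    exact mul_ne_zero ih (qInt_X_ne_zero (k+1) (by omega))

/-- If `T 0 = 1` and `T_{n,q}(2a) = -∑_{b=0}^{a-1} [n-2b choose 2a-2b]_q T_{n,q}(2b)`
(here `T a` denotes `T_{n,q}(2a)`), then `T_{n,q}(2a) = (-1)^a ([n]_q!/[n-2a]_q!) Δ_{a,q}`
for all `2a ≤ n`, working over `ℚ(q)`. -/
theorem stmt11 (n : ℕ) (T : ℕ → RatFunc ℚ) (h0 : T 0 = 1)
    (hrec : ∀ a : ℕ, 1 ≤ a →
      T a = -∑ b ∈ Finset.range a, qBinom (RatFunc.X : RatFunc ℚ) (n - 2 * b) (2 * a - 2 * b) * T b)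
    (a : ℕ) (ha : 2 * a ≤ n) :
    T a = (-1) ^ a * (qFact (RatFunc.X : RatFunc ℚ) n / qFact (RatFunc.X : RatFunc ℚ) (n - 2 * a)) *
      DeltaQ a := by
  induction a using Nat.strong_induction_on with
  | _ a ih =>
  match a, ha with
  | 0, _ =>
    rw [h0]
    have : DeltaQ 0 = 1 := by
      simp [DeltaQ, hessDet, Matrix.det_fin_zero]
    rw [this]
    rw [mul_one, pow_zero, one_mul, Nat.mul_zero, Nat.sub_zero,
      div_self (qFact_X_ne_zero n)]
  | a' + 1, ha =>
    rw [hrec (a' + 1) (by omega)]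
    have hT : ∀ b ∈ Finset.range (a' + 1),
        qBinom (RatFunc.X : RatFunc ℚ) (n - 2 * b) (2 * (a' + 1) - 2 * b) * T b
        = qBinom (RatFunc.X : RatFunc ℚ) (n - 2 * b) (2 * (a' + 1) - 2 * b) *
          ((-1) ^ b * (qFact (RatFunc.X : RatFunc ℚ) n /
            qFact (RatFunc.X : RatFunc ℚ) (n - 2 * b)) * DeltaQ b) := by
      intro b hb
      rw [ih b (by simpa using hb) (by simp at hb; omega)]
    rw [Finset.sum_congr rfl hT]
    have hD : DeltaQ (a' + 1) = ∑ j ∈ Finset.range (a' + 1),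
        (-1 : RatFunc ℚ) ^ (a' + j) * (qFact (RatFunc.X : RatFunc ℚ) (2 * (a' - j) + 2))⁻¹ *
          DeltaQ j := by
      simpa [DeltaQ] using
        hess_rec (fun k => (qFact (RatFunc.X : RatFunc ℚ) (2 * k + 2))⁻¹) a'
    rw [hD, Finset.mul_sum, ← Finset.sum_neg_distrib]
    refine Finset.sum_congr rfl ?_
    intro b hb
    simp only [Finset.mem_range] at hb
    have hb' : b ≤ a' := by omega
    have e1 : 2 * (a' - b) + 2 = 2 * (a' + 1) - 2 * b := by omega
    have e2 : (n - 2 * b) - (2 * (a' + 1) - 2 * b) = n - 2 * (a' + 1) := by omega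
    rw [e1, qBinom, e2]
    have hq1 := qFact_X_ne_zero (n - 2 * b)
    have hq2 := qFact_X_ne_zero (2 * (a' + 1) - 2 * b)
    have hq3 := qFact_X_ne_zero (n - 2 * (a' + 1))
    have hsign : ((-1 : RatFunc ℚ)) ^ (a' + 1) * (-1) ^ (a' + b) = -(-1) ^ b := by
      rw [← pow_add, show a' + 1 + (a' + b) = 2 * a' + (b + 1) by omega, pow_add, pow_mul]
      norm_num [pow_succ]
    field_simp
    ring_nf
    rw [Even.neg_one_pow (⟨a', by omega⟩ : Even (a' * 2)), mul_one]
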